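/- Let H > 1 and 0 < 2HK ≤ 1, and let R_{H,K}(s,t) = 2^{−K}((t^{2H} + s^{2H})^K − |t−s|^{2HK}). Then for all fixed s,t ≥ 0, the rescaled incremental covariance 2^{K−1}·(R_{H,K}(T+t, T+s) − R_{H,K}(T+t, T) − R_{H,K}(T, T+s) + R_{H,K}(T,T)) converges, as T → ∞, to the fractional Brownian motion covariance S_{HK}(s,t) = (1/2)(s^{2HK} + t^{2HK} − |t−s|^{2HK}). -/

import Mathlib

open Filter

/-- The bifractional Brownian motion covariance kernel. -/
noncomputable def Rbif (H K s t : ℝ) : ℝ :=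
  (2 : ℝ) ^ (-K) * ((t ^ (2 * H) + s ^ (2 * H)) ^ K - |t - s| ^ (2 * H * K))

/-- The fractional Brownian motion covariance with Hurst parameter `γ`. -/
noncomputable def Sfbm (γ s t : ℝ) : ℝ :=
  (1 / 2) * (s ^ (2 * γ) + t ^ (2 * γ) - |t - s| ^ (2 * γ))

section Aux

open Real

/-- Auxiliary function: rescaled second difference of the power kernel. -/
noncomputable def psiA (H K s t ε : ℝ) : ℝ :=
  ((1 + s * ε) ^ (2*H) + (1 + t * ε) ^ (2*H)) ^ K
    - (1 + (1 + t * ε) ^ (2*H)) ^ K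
    - ((1 + s * ε) ^ (2*H) + 1) ^ K + (2:ℝ) ^ K

lemma psiA_zero (H K s t : ℝ) : psiA H K s t 0 = 0 := by
  simp [psiA, Real.one_rpow]
  norm_num

lemma psiA_deriv (H K s t : ℝ) : HasDerivAt (psiA H K s t) 0 0 := by
  have hu : ∀ c : ℝ, HasDerivAt (fun ε : ℝ => (1 + c * ε) ^ (2*H)) (2*H*c) 0 := by
    intro c
    have h : HasDerivAt (fun ε : ℝ => 1 + c * ε) c 0 := by
      simpa using ((hasDerivAt_id (0:ℝ)).const_mul c).const_add 1
    have h2 := h.rpow_const (p := 2*H) (Or.inl (by norm_num))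
    convert h2 using 1
    norm_num [Real.one_rpow]
    ring
  have hP : HasDerivAt (fun ε : ℝ => ((1 + s * ε) ^ (2*H) + (1 + t * ε) ^ (2*H)) ^ K)
      (K * (2:ℝ) ^ (K-1) * (2*H*s + 2*H*t)) 0 := by
    have h3 := ((hu s).add (hu t)).rpow_const (p := K)
      (Or.inl (by norm_num [Real.one_rpow]))
    refine h3.congr_deriv ?_
    norm_num [Real.one_rpow, Pi.add_apply]
    ring
  have hQ : HasDerivAt (fun ε : ℝ => (1 + (1 + t * ε) ^ (2*H)) ^ K)
      (K * (2:ℝ) ^ (K-1) * (2*H*t)) 0 := by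
    have h3 := ((hu t).const_add 1).rpow_const (p := K)
      (Or.inl (by norm_num [Real.one_rpow]))
    convert h3 using 1
    norm_num [Real.one_rpow]
    ring
  have hR : HasDerivAt (fun ε : ℝ => ((1 + s * ε) ^ (2*H) + 1) ^ K)
      (K * (2:ℝ) ^ (K-1) * (2*H*s)) 0 := by
    have h3 := ((hu s).add_const 1).rpow_const (p := K)
      (Or.inl (by norm_num [Real.one_rpow]))
    convert h3 using 1
    norm_num [Real.one_rpow]
    ring
  have h4 := ((hP.sub hQ).sub hR).add_const ((2:ℝ)^K)
  refine h4.congr_deriv ?_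
  ring

end Aux

lemma keyId (H K s t T : ℝ) (hs : 0 ≤ s) (ht : 0 ≤ t) (hHK0 : 0 < 2 * H * K)
    (hT : 0 < T) :
    (2 : ℝ) ^ (K - 1) *
        (Rbif H K (T + t) (T + s) - Rbif H K (T + t) T -
          Rbif H K T (T + s) + Rbif H K T T)
      = Sfbm (H * K) s t + (1/2) * (psiA H K s t (1/T) * T ^ (2*H*K)) := by
  have h2 : (2:ℝ) ^ (K - 1) * (2:ℝ) ^ (-K) = 1/2 := by
    rw [← Real.rpow_add two_pos, show K - 1 + -K = -1 by ring, Real.rpow_neg_one]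
    norm_num
  have hfac : ∀ c : ℝ, 0 ≤ c → (T + c) ^ (2*H) = T ^ (2*H) * (1 + c * (1/T)) ^ (2*H) := by
    intro c hc
    rw [← Real.mul_rpow hT.le (by positivity)]
    congr 1
    field_simp
  have hmulK : ∀ X : ℝ, 0 ≤ X → (T ^ (2*H) * X) ^ K = T ^ (2*H*K) * X ^ K := by
    intro X hX
    rw [Real.mul_rpow (by positivity) hX, ← Real.rpow_mul hT.le]
  have a1 : |T + s - (T + t)| = |t - s| := by
    rw [show T + s - (T + t) = -(t - s) by ring, abs_neg]
  have a2 : |T - (T + t)| = t := by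
    rw [show T - (T + t) = -t by ring, abs_neg, abs_of_nonneg ht]
  have a3 : |T + s - T| = s := by
    rw [show T + s - T = s by ring, abs_of_nonneg hs]
  have a4 : |T - T| ^ (2*H*K) = 0 := by
    simp [Real.zero_rpow (ne_of_gt hHK0)]
  have hA : (0:ℝ) ≤ (1 + s * (1/T)) ^ (2*H) := Real.rpow_nonneg (by positivity) _
  have hB : (0:ℝ) ≤ (1 + t * (1/T)) ^ (2*H) := Real.rpow_nonneg (by positivity) _
  have e1 : ((T + s) ^ (2*H) + (T + t) ^ (2*H)) ^ K
      = T ^ (2*H*K) * ((1 + s * (1/T)) ^ (2*H) + (1 + t * (1/T)) ^ (2*H)) ^ K := by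
    rw [hfac s hs, hfac t ht, ← mul_add, hmulK _ (by linarith)]
  have e2 : (T ^ (2*H) + (T + t) ^ (2*H)) ^ K
      = T ^ (2*H*K) * (1 + (1 + t * (1/T)) ^ (2*H)) ^ K := by
    rw [hfac t ht, show T ^ (2*H) + T ^ (2*H) * (1 + t * (1/T)) ^ (2*H)
        = T ^ (2*H) * (1 + (1 + t * (1/T)) ^ (2*H)) by ring,
      hmulK _ (by linarith)]
  have e3 : ((T + s) ^ (2*H) + T ^ (2*H)) ^ K
      = T ^ (2*H*K) * ((1 + s * (1/T)) ^ (2*H) + 1) ^ K := by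
    rw [hfac s hs, show T ^ (2*H) * (1 + s * (1/T)) ^ (2*H) + T ^ (2*H)
        = T ^ (2*H) * ((1 + s * (1/T)) ^ (2*H) + 1) by ring,
      hmulK _ (by linarith)]
  have e4 : (T ^ (2*H) + T ^ (2*H)) ^ K = T ^ (2*H*K) * (2:ℝ) ^ K := by
    rw [show T ^ (2*H) + T ^ (2*H) = T ^ (2*H) * 2 by ring, hmulK 2 (by norm_num)]
  have hexp : 2 * (H * K) = 2 * H * K := by ring
  simp only [Rbif, Sfbm, psiA, hexp]
  rw [a1, a2, a3]
  rw [e1, e2, e3, e4]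
  rw [a4]
  set A := (1 + s * (1/T)) ^ (2*H) with hAdef
  set B := (1 + t * (1/T)) ^ (2*H) with hBdef
  linear_combination (T ^ (2*H*K) * ((A+B)^K - (1+B)^K - (A+1)^K + (2:ℝ)^K)
    + t^(2*H*K) + s^(2*H*K) - |t-s|^(2*H*K)) * h2

/-- For `H > 1`, `0 < 2HK ≤ 1`, the rescaled incremental covariance of the
bifractional Brownian motion converges, as `T → ∞`, to the fractional Brownian
motion covariance with Hurst parameter `HK`. -/
theorem Rbif_increments_tendsto_fbm (H K : ℝ) (hH : 1 < H)
    (hHK0 : 0 < 2 * H * K) (hHK1 : 2 * H * K ≤ 1)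
    (s t : ℝ) (hs : 0 ≤ s) (ht : 0 ≤ t) :
    Tendsto
      (fun T : ℝ => (2 : ℝ) ^ (K - 1) *
        (Rbif H K (T + t) (T + s) - Rbif H K (T + t) T -
          Rbif H K T (T + s) + Rbif H K T T))
      atTop (nhds (Sfbm (H * K) s t)) := by
  have hψ0 : psiA H K s t 0 = 0 := psiA_zero H K s t
  have hslope : Tendsto (fun ε => psiA H K s t ε / ε) (nhdsWithin 0 {(0:ℝ)}ᶜ) (nhds 0) := by
    have h := psiA_deriv H K s t
    rw [hasDerivAt_iff_tendsto_slope] at h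
    refine h.congr fun ε => ?_
    simp [slope, hψ0]
    ring
  have hinv : Tendsto (fun T : ℝ => 1 / T) atTop (nhdsWithin 0 {(0:ℝ)}ᶜ) := by
    refine tendsto_nhdsWithin_of_tendsto_nhds_of_eventually_within _
      (by simpa [one_div] using tendsto_inv_atTop_zero (𝕜 := ℝ)) ?_
    filter_upwards [eventually_gt_atTop (0:ℝ)] with T hT
    simp [ne_of_gt hT]
  have h1 : Tendsto (fun T : ℝ => psiA H K s t (1/T) / (1/T)) atTop (nhds 0) :=
    hslope.comp hinv
  have hbdd : IsBoundedUnder (· ≤ ·) atTop ((‖·‖) ∘ fun T : ℝ => T ^ (2*H*K - 1)) := by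
    refine ⟨1, ?_⟩
    rw [eventually_map]
    filter_upwards [eventually_ge_atTop (1:ℝ)] with T hT
    have h0 : (0:ℝ) ≤ T := by linarith
    simp only [Function.comp_apply, Real.norm_eq_abs,
      abs_of_nonneg (Real.rpow_nonneg h0 _)]
    exact Real.rpow_le_one_of_one_le_of_nonpos hT (by linarith)
  have hG : Tendsto (fun T : ℝ => (psiA H K s t (1/T) / (1/T)) * T ^ (2*H*K - 1))
      atTop (nhds 0) := h1.zero_mul_isBoundedUnder_le hbdd
  have hlim : Tendsto (fun T : ℝ => Sfbm (H*K) s t +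
      (1/2) * ((psiA H K s t (1/T) / (1/T)) * T ^ (2*H*K - 1)))
      atTop (nhds (Sfbm (H*K) s t)) := by
    have h := Tendsto.add (tendsto_const_nhds (x := Sfbm (H*K) s t) (f := atTop))
      (hG.const_mul (1/2))
    simpa using h
  refine hlim.congr' ?_
  filter_upwards [eventually_ge_atTop (1:ℝ)] with T hT
  have hT0 : 0 < T := lt_of_lt_of_le one_pos hT
  rw [keyId H K s t T hs ht hHK0 hT0]
  congr 1
  have hdiv : psiA H K s t (1/T) / (1/T) = psiA H K s t (1/T) * T := by
    field_simp
  rw [hdiv, show (2*H*K) = 1 + (2*H*K - 1) by ring, Real.rpow_add hT0, Real.rpow_one]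
  ring
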